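/- arXiv:1909.06499 — 3 statements merged into one kernel-verified Lean document; each statement's English description precedes it below -/
import Mathlib

section
/- If the total public demand P = Σ_i ⌊(1−β)θ_i⌋ is at most m·⌊(1−α)K⌋ (total public computation capacity over m servers) and θ_i ≤ W for all i, then there exists a feasible scheduling y with ζ_i = 0 for all i, i.e., no request is offloaded to the remote data center. -/
def ov (a b c d : ℤ) : ℤ := max 0 (min b d - max a c)
lemma ov_nonneg (a b c d : ℤ) : 0 ≤ ov a b c d := le_max_left _ _
lemma ov_self (a c d : ℤ) : ov a a c d = 0 := by simp only [ov]; omega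
lemma ov_add {a b e : ℤ} (c d : ℤ) (h1 : a ≤ b) (h2 : b ≤ e) :
    ov a e c d = ov a b c d + ov b e c d := by simp only [ov]; omega
lemma ov_comm (a b c d : ℤ) : ov a b c d = ov c d a b := by simp only [ov]; omega
lemma ov_eval {a b M : ℤ} (h0 : 0 ≤ a) (hab : a ≤ b) (hbM : b ≤ M) : ov a b 0 M = b - a := by
  simp only [ov]; omega
lemma ov_le (a b c d : ℤ) : ov a b c d ≤ max 0 (d - c) := by simp only [ov]; omega
lemma ov_sum (s : ℕ → ℤ) (hs : Monotone s) (c d : ℤ) (N : ℕ) :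
    ∑ k ∈ Finset.range N, ov (s k) (s (k+1)) c d = ov (s 0) (s N) c d := by
  induction N with
  | zero => simp [ov_self]
  | succ N ih =>
    rw [Finset.sum_range_succ, ih, ← ov_add c d (hs (Nat.zero_le N)) (hs (Nat.le_succ N))]

/-- If the total public demand `Σᵢ ⌊(1-β)θᵢ⌋` is at most the total public
capacity `m·⌊(1-α)K⌋` of the `m` servers, and `θᵢ ≤ W` for all `i`, then there
is a feasible scheduling routing every public request to some server without
exceeding any server's public capacity, so that no request is offloaded to the
cloud (`ζᵢ = 0` for all `i`). -/
theorem stmt4 (n m : ℕ) (x : Fin n → Bool) (θ : Fin n → ℝ) (α β K W : ℝ)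
    (hm : (Finset.univ.filter (fun i => x i = true)).card = m)
    (hθ : ∀ i, 0 ≤ θ i) (hθW : ∀ i, θ i ≤ W)
    (hα0 : 0 ≤ α) (hα1 : α ≤ 1) (hβ0 : 0 ≤ β) (hβ1 : β ≤ 1) (hK : 0 ≤ K)
    (hcap : ∑ i, ⌊(1 - β) * θ i⌋ ≤ (m : ℤ) * ⌊(1 - α) * K⌋) :
    ∃ y : Fin n → Fin n → ℤ,
      (∀ i j, 0 ≤ y i j) ∧
      (∀ i j, x j = false → y i j = 0) ∧
      (∀ i, ∑ j, y i j = ⌊(1 - β) * θ i⌋) ∧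
      (∀ j, ∑ i, y i j ≤ ⌊(1 - α) * K⌋) ∧
      (∀ j, max 0 (∑ i, y i j - ⌊(1 - α) * K⌋) = 0) := by
  classical
  set S : Finset (Fin n) := Finset.univ.filter (fun i => x i = true) with hS
  set C : ℤ := ⌊(1 - α) * K⌋ with hC
  have hC0 : 0 ≤ C := Int.floor_nonneg.mpr (mul_nonneg (by linarith) hK)
  set d : Fin n → ℤ := fun i => ⌊(1 - β) * θ i⌋ with hd
  have hd0 : ∀ i, 0 ≤ d i := fun i => Int.floor_nonneg.mpr (mul_nonneg (by linarith) (hθ i))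
  set d' : ℕ → ℤ := fun k => if h : k < n then d ⟨k, h⟩ else 0 with hd'
  have hd'0 : ∀ k, 0 ≤ d' k := by
    intro k; simp only [hd']; split
    · exact hd0 _
    · exact le_refl 0
  set P : ℕ → ℤ := fun t => ∑ k ∈ Finset.range t, d' k with hP
  have hPmono : Monotone P := by
    intro a b hab
    exact Finset.sum_le_sum_of_subset_of_nonneg (Finset.range_subset_range.mpr hab)
      (fun k _ _ => hd'0 k)
  have hP0 : P 0 = 0 := by simp [hP]
  have hPpos : ∀ t, 0 ≤ P t := fun t => hP0 ▸ hPmono (Nat.zero_le t)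
  have hPn : P n ≤ (m : ℤ) * C := by
    have : P n = ∑ i, d i := by
      show ∑ k ∈ Finset.range n, d' k = _
      rw [← Fin.sum_univ_eq_sum_range d' n]
      exact Finset.sum_congr rfl fun i _ => by simp [hd', i.isLt]
    rw [this]; exact hcap
  have hPsucc : ∀ i : Fin n, P ((i : ℕ) + 1) = P (i : ℕ) + d i := by
    intro i
    rw [hP]
    simp only
    rw [Finset.sum_range_succ]
    congr 1
    simp [hd', i.isLt]
  set e := S.orderIsoOfFin hm with he
  set y : Fin n → Fin n → ℤ := fun i j =>
    if hj : j ∈ S then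
      ov (P (i : ℕ)) (P ((i : ℕ) + 1))
        (((e.symm ⟨j, hj⟩ : Fin m) : ℤ) * C) ((((e.symm ⟨j, hj⟩ : Fin m) : ℤ) + 1) * C)
    else 0 with hy
  -- sum over columns for a fixed row i
  have hrow : ∀ i : Fin n, ∑ j, y i j = d i := by
    intro i
    have h1 : ∑ j, y i j = ∑ j ∈ S, y i j :=
      (Finset.sum_subset (Finset.subset_univ S) (fun j _ hj => dif_neg hj)).symm
    have h2 : ∑ j ∈ S, y i j = ∑ k : Fin m, y i (e k : Fin n) := by
      rw [← Finset.sum_coe_sort S (y i)]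
      exact (Equiv.sum_comp e.toEquiv (fun j => y i (j : Fin n))).symm
    have h3 : ∀ k : Fin m, y i (e k : Fin n) =
        ov (P (i : ℕ)) (P ((i : ℕ) + 1)) ((k : ℤ) * C) (((k : ℤ) + 1) * C) := by
      intro k
      have hjS : (e k : Fin n) ∈ S := (e k).2
      simp only [hy, dif_pos hjS]
      congr 2 <;> rw [show (⟨(e k : Fin n), hjS⟩ : {a // a ∈ S}) = e k from rfl,
        OrderIso.symm_apply_apply]
    have h4 : ∑ k : Fin m, ov (P (i : ℕ)) (P ((i : ℕ) + 1)) ((k : ℤ) * C) (((k : ℤ) + 1) * C)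
        = ∑ k ∈ Finset.range m,
            ov (P (i : ℕ)) (P ((i : ℕ) + 1)) ((k : ℤ) * C) (((k : ℤ) + 1) * C) :=
      Fin.sum_univ_eq_sum_range
        (fun k => ov (P (i : ℕ)) (P ((i : ℕ) + 1)) ((k : ℤ) * C) (((k : ℤ) + 1) * C)) m
    have hsmono : Monotone (fun k : ℕ => (k : ℤ) * C) := by
      intro a b hab
      exact mul_le_mul_of_nonneg_right (by exact_mod_cast hab) hC0
    have h5 : ∑ k ∈ Finset.range m,
        ov (P (i : ℕ)) (P ((i : ℕ) + 1)) ((k : ℤ) * C) (((k : ℤ) + 1) * C)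
        = ov 0 ((m : ℤ) * C) (P (i : ℕ)) (P ((i : ℕ) + 1)) := by
      have := ov_sum (fun k : ℕ => (k : ℤ) * C) hsmono (P (i : ℕ)) (P ((i : ℕ) + 1)) m
      simp only [Nat.cast_zero, zero_mul] at this
      rw [← this]
      refine Finset.sum_congr rfl fun k _ => ?_
      rw [ov_comm]
      push_cast
      ring_nf
    rw [h1, h2, Finset.sum_congr rfl fun k _ => h3 k, h4, h5, ov_comm,
      ov_eval (hPpos _) (hPmono (Nat.le_succ _)) (le_trans (hPmono i.isLt) hPn),
      hPsucc i]
    ring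
  -- sum over rows for a fixed column j
  have hcol : ∀ j : Fin n, ∑ i, y i j ≤ C := by
    intro j
    by_cases hj : j ∈ S
    · set k : ℤ := ((e.symm ⟨j, hj⟩ : Fin m) : ℤ) with hk
      have h1 : ∀ i : Fin n, y i j = ov (P (i : ℕ)) (P ((i : ℕ) + 1)) (k * C) ((k + 1) * C) :=
        fun i => dif_pos hj
      have h2 : ∑ i, y i j
          = ∑ t ∈ Finset.range n, ov (P t) (P (t + 1)) (k * C) ((k + 1) * C) := by
        rw [Finset.sum_congr rfl fun i _ => h1 i]
        exact Fin.sum_univ_eq_sum_range (fun t => ov (P t) (P (t + 1)) (k * C) ((k + 1) * C)) n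
      rw [h2, ov_sum P hPmono]
      calc ov (P 0) (P n) (k * C) ((k + 1) * C) ≤ max 0 ((k + 1) * C - k * C) := ov_le _ _ _ _
        _ = C := by rw [show (k + 1) * C - k * C = C by ring]; exact max_eq_right hC0
    · have : ∀ i : Fin n, y i j = 0 := fun i => dif_neg hj
      rw [Finset.sum_congr rfl fun i _ => this i]
      simpa using hC0
  refine ⟨y, fun i j => ?_, fun i j hxj => ?_, hrow, hcol, fun j => ?_⟩
  · simp only [hy]; split
    · exact ov_nonneg _ _ _ _
    · exact le_refl 0
  · have : j ∉ S := by simp [hS, hxj]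
    exact dif_neg this
  · exact max_eq_left (sub_nonpos.mpr (hcol j))
end

section
/- In the IKIW sub-problem, the total number of requests offloaded to the cloud across all servers equals max{0, Σ_i ⌊(1−β)χ_i⌋_pub − m⌊(1−α)K⌋}, where the served public demand per AP after communication blocking is ⌊χ_i − βθ_i⌋ for server-hosting APs and ⌊χ_i⌋ for others, provided every server is saturated in an optimal scheduling when total demand exceeds total capacity. -/
/-- IKIW: if every server is saturated (receives at least its public capacity
`cap = ⌊(1-α)K⌋`), the post-blocking public demand `D` is fully routed to the
servers, and `D` exceeds the total capacity `m·cap`, then the total cloud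
offload equals `max 0 (D - m·cap) = D - m·cap`. -/
theorem stmt13 (n m : ℕ) (x : Fin n → Bool) (θ : Fin n → ℝ)
    (y : Fin n → Fin n → ℤ) (ζ : Fin n → ℤ) (α β K W : ℝ) (D cap : ℤ)
    (hm : (Finset.univ.filter (fun i => x i = true)).card = m)
    (hθ : ∀ i, 0 ≤ θ i)
    (hcap : cap = ⌊(1 - α) * K⌋) (hcap0 : 0 ≤ cap)
    (hD : D = ∑ i ∈ Finset.univ.filter (fun i => x i = true),
                ⌊min (θ i) W - β * θ i⌋
            + ∑ i ∈ Finset.univ.filter (fun i => x i = false),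
                ⌊min (θ i) W⌋)
    (hexcess : (m : ℤ) * cap < D)
    (hy0 : ∀ i j, 0 ≤ y i j)
    (hynoserver : ∀ i j, x j = false → y i j = 0)
    (htotal : ∑ j, ∑ i, y i j = D)
    (hζ : ∀ j, ζ j = max 0 (∑ i, y i j - cap))
    (hsat : ∀ j, x j = true → cap ≤ ∑ i, y i j) :
    ∑ j, ζ j = max 0 (D - (m : ℤ) * cap) ∧
    ∑ j, ζ j = D - (m : ℤ) * cap := by
  have key : ∑ j, ζ j = D - (m : ℤ) * cap := by
    have hsplit : ∑ j, ζ j =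
        ∑ j ∈ Finset.univ.filter (fun j => x j = true), ζ j
      + ∑ j ∈ Finset.univ.filter (fun j => ¬ (x j = true)), ζ j := by
      rw [Finset.sum_filter_add_sum_filter_not]
    have h1 : ∑ j ∈ Finset.univ.filter (fun j => x j = true), ζ j
        = ∑ j ∈ Finset.univ.filter (fun j => x j = true), (∑ i, y i j - cap) := by
      apply Finset.sum_congr rfl
      intro j hj
      simp only [Finset.mem_filter] at hj
      rw [hζ j, max_eq_right (by linarith [hsat j hj.2])]
    have h2 : ∑ j ∈ Finset.univ.filter (fun j => ¬ (x j = true)), ζ j = 0 := by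
      apply Finset.sum_eq_zero
      intro j hj
      simp only [Finset.mem_filter, Bool.not_eq_true] at hj
      have hzero : ∑ i, y i j = 0 :=
        Finset.sum_eq_zero (fun i _ => hynoserver i j hj.2)
      rw [hζ j, hzero]
      omega
    have h3 : ∑ j ∈ Finset.univ.filter (fun j => ¬ (x j = true)), ∑ i, y i j = 0 := by
      apply Finset.sum_eq_zero
      intro j hj
      simp only [Finset.mem_filter, Bool.not_eq_true] at hj
      exact Finset.sum_eq_zero (fun i _ => hynoserver i j hj.2)
    have h4 : ∑ j ∈ Finset.univ.filter (fun j => x j = true), ∑ i, y i j = D := by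
      have := Finset.sum_filter_add_sum_filter_not Finset.univ
        (fun j => x j = true) (fun j => ∑ i, y i j)
      rw [h3] at this
      simpa [htotal] using this
    rw [hsplit, h1, h2, Finset.sum_sub_distrib, h4, Finset.sum_const, hm]
    ring
  refine ⟨?_, key⟩
  rw [key, max_eq_right (by linarith)]
end

section
/- If the cloud delay λ is strictly greater than every inter-AP delay ξ_{i,j}, then any optimal scheduling offloads a request to the cloud only if every server's public capacity is exhausted: in an optimal solution, Σ_i ζ_i > 0 implies Σ_j y_{j,i'} = ⌊(1−α)K⌋ for every server-hosting AP i'. -/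
/-- If the cloud delay `λ` strictly exceeds every inter-AP delay `ξᵢⱼ`, then
in any optimal scheduling, offloading occurs only if every server's public
capacity is exhausted: `Σᵢ ζᵢ > 0` implies `Σⱼ y_{j,i'} = ⌊(1-α)K⌋` for every
server-hosting AP `i'`. -/
theorem stmt14 (n : ℕ) (x : Fin n → Bool) (θ π : Fin n → ℝ)
    (ξ : Fin n → Fin n → ℝ) (α β K W lam : ℝ)
    (d : Fin n → ℝ) (cap : ℝ)
    (hd : ∀ i, d i = (⌊(1 - β) * θ i⌋ : ℝ)) (hcap : cap = (⌊(1 - α) * K⌋ : ℝ))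
    (hπ : ∀ i, 0 ≤ π i) (hξ : ∀ i j, 0 ≤ ξ i j)
    (hlam : ∀ i j, ξ i j < lam) (hlamπ : ∀ i, π i < lam)
    (Feasible : (Fin n → Fin n → ℝ) → (Fin n → ℝ) → Prop)
    (hFeasible : ∀ y ζ, Feasible y ζ ↔
      ((∀ i j, 0 ≤ y i j) ∧ (∀ i, 0 ≤ ζ i) ∧
       (∀ i j, x j = false → y i j = 0) ∧
       -- all post-blocking public demand is routed to servers or to the cloud
       (∀ i, ∑ j, y i j + ζ i = d i) ∧
       -- no server receives more than its public capacity
       (∀ j, x j = true → ∑ i, y i j ≤ cap)))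
    (obj : (Fin n → Fin n → ℝ) → (Fin n → ℝ) → ℝ)
    (hobj : ∀ y ζ, obj y ζ =
      ∑ i, lam * ζ i + ∑ i, π i * min (θ i) W + ∑ i, ∑ j, ξ i j * y i j)
    (y : Fin n → Fin n → ℝ) (ζ : Fin n → ℝ)
    (hfeas : Feasible y ζ)
    (hopt : ∀ y' ζ', Feasible y' ζ' → obj y ζ ≤ obj y' ζ') :
    0 < ∑ i, ζ i → ∀ i', x i' = true → ∑ j, y j i' = cap := by
  intro hpos i' hx
  obtain ⟨hy0, hz0, hzero, hrow, hcol⟩ := (hFeasible y ζ).1 hfeas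
  by_contra hne
  have hle := hcol i' hx
  have hlt : ∑ i, y i i' < cap := lt_of_le_of_ne hle hne
  obtain ⟨i₀, _, hzi₀⟩ : ∃ i ∈ Finset.univ, ζ i ≠ 0 :=
    Finset.exists_ne_zero_of_sum_ne_zero (ne_of_gt hpos)
  have hzpos : 0 < ζ i₀ := lt_of_le_of_ne (hz0 i₀) (Ne.symm hzi₀)
  set ε : ℝ := min (ζ i₀) (cap - ∑ i, y i i') with hε
  have hεpos : 0 < ε := lt_min hzpos (by linarith)
  have hε1 : ε ≤ ζ i₀ := min_le_left _ _
  have hε2 : ε ≤ cap - ∑ i, y i i' := min_le_right _ _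
  set y' : Fin n → Fin n → ℝ := fun i j => y i j + if i = i₀ ∧ j = i' then ε else 0 with hy'
  set ζ' : Fin n → ℝ := fun i => ζ i - if i = i₀ then ε else 0 with hζ'
  have hrowsum : ∀ i, ∑ j, y' i j = ∑ j, y i j + if i = i₀ then ε else 0 := by
    intro i
    rw [hy']
    simp only [Finset.sum_add_distrib]
    congr 1
    by_cases h : i = i₀
    · simp [h, Finset.sum_ite_eq' Finset.univ i']
    · simp [h]
  have hcolsum : ∀ j, ∑ i, y' i j = ∑ i, y i j + if j = i' then ε else 0 := by
    intro j
    rw [hy']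
    simp only [Finset.sum_add_distrib]
    congr 1
    by_cases h : j = i'
    · simp [h, Finset.sum_ite_eq' Finset.univ i₀]
    · simp [h]
  have hfeas' : Feasible y' ζ' := by
    rw [hFeasible]
    refine ⟨?_, ?_, ?_, ?_, ?_⟩
    · intro i j
      have := hy0 i j
      dsimp [y']
      split <;> [linarith [hεpos.le]; linarith]
    · intro i
      have := hz0 i
      dsimp [ζ']
      split
      · rename_i h; rw [h]; linarith
      · linarith
    · intro i j hj
      have := hzero i j hj
      dsimp [y']
      split
      · rename_i h; rw [h.2] at hj; rw [hx] at hj; exact absurd hj (by simp)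
      · simpa using this
    · intro i
      rw [hrowsum i]
      dsimp [ζ']
      by_cases h : i = i₀
      · subst h; have := hrow i; simp; linarith
      · have := hrow i; simp [h]; linarith
    · intro j hj
      rw [hcolsum j]
      by_cases h : j = i'
      · subst h; simp; linarith
      · simp [h]; exact hcol j hj
  have hsum1 : ∑ i, lam * ζ' i = ∑ i, lam * ζ i - lam * ε := by
    dsimp [ζ']
    simp only [mul_sub, Finset.sum_sub_distrib, mul_ite, mul_zero]
    rw [Finset.sum_ite_eq' Finset.univ i₀]
    simp
  have hsum2 : ∑ i, ∑ j, ξ i j * y' i j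
      = ∑ i, ∑ j, ξ i j * y i j + ξ i₀ i' * ε := by
    dsimp [y']
    simp only [mul_add, Finset.sum_add_distrib, mul_ite, mul_zero]
    congr 1
    rw [Finset.sum_comm]
    rw [Finset.sum_eq_single i']
    · rw [Finset.sum_eq_single i₀]
      · simp
      · intro b _ hb; simp [hb]
      · simp
    · intro b _ hb
      apply Finset.sum_eq_zero
      intro c _
      simp [hb]
    · simp
  have hcompare : obj y' ζ' < obj y ζ := by
    rw [hobj, hobj, hsum1, hsum2]
    have : ξ i₀ i' < lam := hlam i₀ i'
    nlinarith [hεpos]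
  exact absurd (hopt y' ζ' hfeas') (not_le.2 hcompare)
end
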